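/- Define T on C¹([0, 6/7]) by (Tf)(t) = cos²(πt/4)·f(t/8) + sin²(πt/4)·f(t/8 + 3/4). Then T maps C¹([0,6/7]) to itself (since t/8 and t/8 + 3/4 lie in [0,6/7] for t ∈ [0,6/7]), fixes the value at 0 (Tf(0) = f(0)), and satisfies the contraction estimate max|(Tf)'| ≤ (3π/16 + 1/8)·max|f'|, where 3π/16 + 1/8 < 1. -/

import Mathlib

open Real

theorem stmt12 (f f' : ℝ → ℝ) (C : ℝ)
    (hf : ∀ t ∈ Set.Icc (0:ℝ) (6/7), HasDerivWithinAt f (f' t) (Set.Icc (0:ℝ) (6/7)) t)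
    (hC : ∀ t ∈ Set.Icc (0:ℝ) (6/7), |f' t| ≤ C) :
    (∀ t ∈ Set.Icc (0:ℝ) (6/7),
        t / 8 ∈ Set.Icc (0:ℝ) (6/7) ∧ t / 8 + 3/4 ∈ Set.Icc (0:ℝ) (6/7)) ∧
    ((fun s => Real.cos (π * s / 4) ^ 2 * f (s / 8)
        + Real.sin (π * s / 4) ^ 2 * f (s / 8 + 3/4)) 0 = f 0) ∧
    (3 * π / 16 + 1/8 < 1) ∧
    (∃ g : ℝ → ℝ, ∀ t ∈ Set.Icc (0:ℝ) (6/7),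
      HasDerivWithinAt
        (fun s => Real.cos (π * s / 4) ^ 2 * f (s / 8)
          + Real.sin (π * s / 4) ^ 2 * f (s / 8 + 3/4))
        (g t) (Set.Icc (0:ℝ) (6/7)) t ∧
      |g t| ≤ (3 * π / 16 + 1/8) * C) := by
  have hC0 : 0 ≤ C := le_trans (abs_nonneg _) (hC 0 (by norm_num))
  have hmem : ∀ t ∈ Set.Icc (0:ℝ) (6/7),
      t / 8 ∈ Set.Icc (0:ℝ) (6/7) ∧ t / 8 + 3/4 ∈ Set.Icc (0:ℝ) (6/7) := by
    intro t ht
    obtain ⟨h0, h1⟩ := ht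
    refine ⟨⟨by linarith, by linarith⟩, ⟨by linarith, by linarith⟩⟩
  refine ⟨hmem, by simp, by have := Real.pi_lt_d2; norm_num at this ⊢; linarith, ?_⟩
  refine ⟨fun t => (π/4) * Real.sin (π*t/2) * (f (t/8 + 3/4) - f (t/8))
      + Real.cos (π*t/4)^2 * (f' (t/8) * (1/8))
      + Real.sin (π*t/4)^2 * (f' (t/8 + 3/4) * (1/8)), ?_⟩
  intro t ht
  obtain ⟨hm1, hm2⟩ := hmem t ht
  have h8 : HasDerivWithinAt (fun s : ℝ => s / 8) (1/8) (Set.Icc (0:ℝ) (6/7)) t :=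
    (hasDerivWithinAt_id t _).div_const 8
  have h8' : HasDerivWithinAt (fun s : ℝ => s / 8 + 3/4) (1/8) (Set.Icc (0:ℝ) (6/7)) t :=
    h8.add_const _
  have hmap1 : Set.MapsTo (fun s : ℝ => s / 8) (Set.Icc (0:ℝ) (6/7)) (Set.Icc (0:ℝ) (6/7)) :=
    fun x hx => (hmem x hx).1
  have hmap2 : Set.MapsTo (fun s : ℝ => s / 8 + 3/4) (Set.Icc (0:ℝ) (6/7)) (Set.Icc (0:ℝ) (6/7)) :=
    fun x hx => (hmem x hx).2
  have hfa : HasDerivWithinAt (fun s => f (s / 8)) (f' (t/8) * (1/8)) (Set.Icc (0:ℝ) (6/7)) t :=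
    (hf _ hm1).comp t h8 hmap1
  have hfb : HasDerivWithinAt (fun s => f (s / 8 + 3/4)) (f' (t/8 + 3/4) * (1/8))
      (Set.Icc (0:ℝ) (6/7)) t := (hf _ hm2).comp t h8' hmap2
  have hu : HasDerivAt (fun s : ℝ => π * s / 4) (π/4) t := by
    simpa using ((hasDerivAt_id t).const_mul π).div_const 4
  have hcos : HasDerivAt (fun s : ℝ => Real.cos (π*s/4)) (-Real.sin (π*t/4) * (π/4)) t := hu.cos
  have hsin : HasDerivAt (fun s : ℝ => Real.sin (π*s/4)) (Real.cos (π*t/4) * (π/4)) t := hu.sin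
  have hcos2 : HasDerivAt (fun s : ℝ => Real.cos (π*s/4)^2)
      (2 * Real.cos (π*t/4) ^ 1 * (-Real.sin (π*t/4) * (π/4))) t := hcos.pow 2
  have hsin2 : HasDerivAt (fun s : ℝ => Real.sin (π*s/4)^2)
      (2 * Real.sin (π*t/4) ^ 1 * (Real.cos (π*t/4) * (π/4))) t := hsin.pow 2
  have hd := ((hcos2.hasDerivWithinAt.mul hfa).add (hsin2.hasDerivWithinAt.mul hfb))
  constructor
  · convert hd using 1
    case e'_4 => rfl
    case e'_5 => rfl
    case e'_8 => rfl
    have h2 : Real.sin (π*t/2) = 2 * Real.sin (π*t/4) * Real.cos (π*t/4) := by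
      rw [show π*t/2 = 2 * (π*t/4) by ring, Real.sin_two_mul]
    beta_reduce
    rw [h2]; ring
  · have key : |f (t/8 + 3/4) - f (t/8)| ≤ C * (3/4) := by
      have := (convex_Icc (0:ℝ) (6/7)).norm_image_sub_le_of_norm_hasDerivWithin_le hf
        (fun x hx => by simpa [Real.norm_eq_abs] using hC x hx) hm1 hm2
      simpa [Real.norm_eq_abs, abs_of_nonneg] using this
    have hs1 : |Real.sin (π*t/2)| ≤ 1 := Real.abs_sin_le_one _
    have hpyth : Real.cos (π*t/4)^2 + Real.sin (π*t/4)^2 = 1 := by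
      rw [add_comm]; exact Real.sin_sq_add_cos_sq _
    have ha : |f' (t/8)| ≤ C := hC _ hm1
    have hb : |f' (t/8 + 3/4)| ≤ C := hC _ hm2
    have hpi : (0:ℝ) < π := Real.pi_pos
    have e1 : |(π/4) * Real.sin (π*t/2) * (f (t/8 + 3/4) - f (t/8))| ≤ (π/4) * (C * (3/4)) := by
      rw [abs_mul, abs_mul, abs_of_nonneg (by positivity : (0:ℝ) ≤ π/4)]
      have h' : |Real.sin (π*t/2)| * |f (t/8 + 3/4) - f (t/8)| ≤ C * (3/4) := by
        simpa using mul_le_mul hs1 key (abs_nonneg _) zero_le_one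
      calc π/4 * |Real.sin (π*t/2)| * |f (t/8 + 3/4) - f (t/8)|
          = π/4 * (|Real.sin (π*t/2)| * |f (t/8 + 3/4) - f (t/8)|) := by ring
        _ ≤ π/4 * (C * (3/4)) := mul_le_mul_of_nonneg_left h' (by positivity)
    have e2 : |Real.cos (π*t/4)^2 * (f' (t/8) * (1/8))| ≤ Real.cos (π*t/4)^2 * (C * (1/8)) := by
      rw [abs_mul, abs_mul, abs_of_nonneg (sq_nonneg _), abs_of_nonneg (by norm_num : (0:ℝ) ≤ (1:ℝ)/8)]
      have := sq_nonneg (Real.cos (π*t/4))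
      nlinarith
    have e3 : |Real.sin (π*t/4)^2 * (f' (t/8 + 3/4) * (1/8))| ≤ Real.sin (π*t/4)^2 * (C * (1/8)) := by
      rw [abs_mul, abs_mul, abs_of_nonneg (sq_nonneg _), abs_of_nonneg (by norm_num : (0:ℝ) ≤ (1:ℝ)/8)]
      have := sq_nonneg (Real.sin (π*t/4))
      nlinarith
    have habs : |(π/4) * Real.sin (π*t/2) * (f (t/8 + 3/4) - f (t/8))
          + Real.cos (π*t/4)^2 * (f' (t/8) * (1/8))
          + Real.sin (π*t/4)^2 * (f' (t/8 + 3/4) * (1/8))|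
        ≤ |(π/4) * Real.sin (π*t/2) * (f (t/8 + 3/4) - f (t/8))|
          + |Real.cos (π*t/4)^2 * (f' (t/8) * (1/8))|
          + |Real.sin (π*t/4)^2 * (f' (t/8 + 3/4) * (1/8))| :=
      (abs_add_le _ _).trans (by gcongr; exact abs_add_le _ _)
    have : (π/4) * (C * (3/4)) + Real.cos (π*t/4)^2 * (C * (1/8))
        + Real.sin (π*t/4)^2 * (C * (1/8)) = (3 * π / 16 + 1/8) * C := by nlinarith [hpyth]
    linarith
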